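/- Let m be a positive even number and let K be a finite set of ordered pairs of elements of Fin m such that all first and second components of pairs of K are pairwise distinct (hence |K| ≤ m/2). Then conjugation by the phase-type fold-transversal gate U_P(Q(K)) maps the stabilizer group S of the quantum Reed–Muller code QRM(m) onto itself: for every g ∈ S, both U_P(Q(K)) * g * U_P(Q(K))⁻¹ ∈ S and U_P(Q(K))⁻¹ * g * U_P(Q(K)) ∈ S. -/

import Mathlib

/-- The vector `v_A` : its value at a label `x : Fin m → ZMod 2` is `∏_{a ∈ A} x a`. -/
def vA (m : ℕ) (A : Finset (Fin m)) : (Fin m → ZMod 2) → ZMod 2 :=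
  fun x => ∏ a ∈ A, x a

/-- Qubit labels. -/
abbrev Lab (m : ℕ) := Fin m → ZMod 2

/-- Basis states: functions from qubit labels to `ZMod 2`. -/
abbrev St (m : ℕ) := Lab m → ZMod 2

/-- The Pauli-X type operator `X(w)`: the matrix with `(y, x)` entry `1` if
`y = x + w` and `0` otherwise. -/
noncomputable def Xmat (m : ℕ) (w : St m) : Matrix (St m) (St m) ℂ :=
  Matrix.of fun y x => if y = x + w then 1 else 0

/-- `N(w, x)`: the number of qubits `q` with `w q = 1` and `x q = 1`. -/
def Nwt (m : ℕ) (w x : St m) : ℕ :=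
  (Finset.univ.filter (fun q => w q = 1 ∧ x q = 1)).card

/-- The Pauli-Z type operator `Z(w)`: the diagonal matrix with `(x, x)` entry
`(-1) ^ N(w, x)`. -/
noncomputable def Zmat (m : ℕ) (w : St m) : Matrix (St m) (St m) ℂ :=
  Matrix.diagonal fun x => (-1) ^ Nwt m w x

/-- The stabilizer group of the quantum Reed–Muller code `QRM(m)`: the subgroup
of invertible complex matrices generated by the matrices `X(v_A)` and `Z(v_A)`
for `A ⊆ Fin m` with `|A| ≤ m/2 - 1`. -/
noncomputable def stab (m : ℕ) : Subgroup (Matrix (St m) (St m) ℂ)ˣ :=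
  Subgroup.closure {u : (Matrix (St m) (St m) ℂ)ˣ |
    ∃ A : Finset (Fin m), A.card ≤ m / 2 - 1 ∧
      ((u : Matrix (St m) (St m) ℂ) = Xmat m (vA m A) ∨
       (u : Matrix (St m) (St m) ℂ) = Zmat m (vA m A))}

/-- The phase-type fold-transversal gate `U_P(π)` of an involutive permutation
`π` of the qubits: the diagonal matrix with `(x, x)` entry `i ^ c(x)`, where
`c(x) = ∑_q x(q)·x(π(q))` computed in `ℕ`. -/
noncomputable def UPg (m : ℕ) (f : Lab m → Lab m) : Matrix (St m) (St m) ℂ :=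
  Matrix.diagonal fun x => Complex.I ^ (∑ q, (x q).val * (x (f q)).val)

/-- All first and second components of the pairs in `K` are pairwise
distinct. -/
def distinctPairs (m : ℕ) (K : Finset (Fin m × Fin m)) : Prop :=
  (∀ p ∈ K, p.1 ≠ p.2) ∧
  (∀ p ∈ K, ∀ q ∈ K, p ≠ q →
    p.1 ≠ q.1 ∧ p.1 ≠ q.2 ∧ p.2 ≠ q.1 ∧ p.2 ≠ q.2)

/-- The permutation `Q(K)` of the labels: it sends `x` to the label `y` with
`y i = x i + x j` for each `(i,j) ∈ K` and `y l = x l` for all other `l`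
(stated via a sum over the pairs of `K` with first component `l`; when the
components of `K` are pairwise distinct there is at most one such pair). -/
def QKmap (m : ℕ) (K : Finset (Fin m × Fin m)) : Lab m → Lab m :=
  fun x l => x l + ∑ p ∈ K.filter (fun p => p.1 = l), x p.2

open Finset

lemma ite_val : ∀ a b : ZMod 2, (if a = 1 ∧ b = 1 then (1:ℕ) else 0) = a.val * b.val := by decide

lemma Nwt_eq_sum (m : ℕ) (w x : St m) : Nwt m w x = ∑ q, (w q).val * (x q).val := by
  rw [Nwt, card_filter]
  exact Finset.sum_congr rfl fun q _ => ite_val _ _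

lemma negpow (n k : ℕ) (h : n % 2 = k % 2) : (-1:ℂ)^n = (-1)^k := by
  rw [← Nat.div_add_mod n 2, ← Nat.div_add_mod k 2, pow_add, pow_add, pow_mul, pow_mul]
  norm_num [h]

lemma Ipow (n k : ℕ) (h : n % 4 = k % 4) : (Complex.I)^n = Complex.I^k := by
  rw [← Nat.div_add_mod n 4, ← Nat.div_add_mod k 4, pow_add, pow_add, pow_mul, pow_mul]
  rw [Complex.I_pow_four, one_pow, one_pow, h]

lemma val_parity : ∀ a b c : ZMod 2,
    (a.val * c.val + b.val * c.val) % 2 = ((a+b).val * c.val) % 2 := by decide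

lemma Zmat_add (m : ℕ) (u v : St m) : Zmat m u * Zmat m v = Zmat m (u + v) := by
  have h : ∀ x : St m, (-1:ℂ)^(Nwt m u x) * (-1)^(Nwt m v x) = (-1)^(Nwt m (u+v) x) := by
    intro x
    rw [← pow_add]
    refine negpow _ _ ?_
    rw [Nwt_eq_sum, Nwt_eq_sum, Nwt_eq_sum, ← Finset.sum_add_distrib,
      Finset.sum_nat_mod, Finset.sum_nat_mod (Finset.univ) 2 (fun q => ((u+v) q).val * (x q).val)]
    congr 1
    exact Finset.sum_congr rfl fun q _ => val_parity _ _ _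
  unfold Zmat
  rw [Matrix.diagonal_mul_diagonal]
  exact congrArg Matrix.diagonal (funext h)

lemma Zmat_zero (m : ℕ) : Zmat m 0 = 1 := by
  unfold Zmat
  rw [← Matrix.diagonal_one]
  refine congrArg Matrix.diagonal (funext fun x => ?_)
  have : Nwt m 0 x = 0 := by
    rw [Nwt_eq_sum]; simp [ZMod.val_zero]
  rw [this, pow_zero]

lemma add_self_st (m : ℕ) (w : St m) : w + w = 0 := by
  funext q; exact CharTwo.add_self_eq_zero _

lemma Zmat_sq (m : ℕ) (w : St m) : Zmat m w * Zmat m w = 1 := by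
  rw [Zmat_add, add_self_st, Zmat_zero]

lemma Xmat_mul (m : ℕ) (u v : St m) : Xmat m u * Xmat m v = Xmat m (u + v) := by
  ext y x
  rw [Matrix.mul_apply]
  unfold Xmat
  simp only [Matrix.of_apply]
  rw [Finset.sum_eq_single (x + v)]
  · have : x + v + u = x + (u + v) := by
      funext q; simp [add_comm, add_left_comm]
    simp [this]
  · intro z _ hz
    rw [if_neg (fun h => hz h), mul_zero]
  · simp

lemma Xmat_zero (m : ℕ) : Xmat m 0 = 1 := by
  ext y x
  unfold Xmat
  simp [Matrix.one_apply, eq_comm]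

lemma Xmat_sq (m : ℕ) (w : St m) : Xmat m w * Xmat m w = 1 := by
  rw [Xmat_mul, add_self_st, Xmat_zero]

noncomputable def Zunit (m : ℕ) (w : St m) : (Matrix (St m) (St m) ℂ)ˣ :=
  ⟨Zmat m w, Zmat m w, Zmat_sq m w, Zmat_sq m w⟩

noncomputable def Xunit (m : ℕ) (w : St m) : (Matrix (St m) (St m) ℂ)ˣ :=
  ⟨Xmat m w, Xmat m w, Xmat_sq m w, Xmat_sq m w⟩

lemma sum_pi {m : ℕ} (π : Lab m → Lab m) (hπ : Function.Involutive π) (f : Lab m → ZMod 4) :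
    ∑ q, f (π q) = ∑ q, f q := by
  exact Equiv.sum_comp hπ.toPerm f

lemma dec4 : ∀ a u a' u' : ZMod 2,
    (((a+u).val : ZMod 4) * ((a'+u').val : ZMod 4)) =
      (a.val : ZMod 4) * a'.val + (a.val : ZMod 4) * u'.val + (u.val : ZMod 4) * a'.val
        + (u.val : ZMod 4) * u'.val
        + 2 * ((a.val : ZMod 4) * a'.val * u'.val + (a.val : ZMod 4) * u.val * a'.val
          + (a.val : ZMod 4) * u.val * u'.val + (u.val : ZMod 4) * a'.val * u'.val) := by decide

lemma keymod {m : ℕ} (π : Lab m → Lab m) (hπ : Function.Involutive π) (w x : St m) :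
    ((∑ q, ((x+w) q).val * ((x+w) (π q)).val : ℕ) : ZMod 4)
      = ((∑ q, (x q).val * (x (π q)).val : ℕ) : ZMod 4)
        + 2 * (Nwt m (fun q => w (π q)) x : ZMod 4)
        + ((∑ q, (w q).val * (w (π q)).val : ℕ) : ZMod 4) := by
  set a : Lab m → ZMod 4 := fun q => ((x q).val : ZMod 4) with ha
  set u : Lab m → ZMod 4 := fun q => ((w q).val : ZMod 4) with hu
  have hN : (Nwt m (fun q => w (π q)) x : ZMod 4) = ∑ q, u (π q) * a q := by
    rw [Nwt_eq_sum]; push_cast; rfl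
  push_cast
  rw [hN]
  have step : ∀ q : Lab m, (((x+w) q).val : ZMod 4) * (((x+w) (π q)).val : ZMod 4)
      = a q * a (π q) + a q * u (π q) + u q * a (π q) + u q * u (π q)
        + 2 * (a q * a (π q) * u (π q) + a q * u q * a (π q)
          + a q * u q * u (π q) + u q * a (π q) * u (π q)) := by
    intro q
    simpa [ha, hu] using dec4 (x q) (w q) (x (π q)) (w (π q))
  calc ∑ q, (((x+w) q).val : ZMod 4) * (((x+w) (π q)).val : ZMod 4)
      = ∑ q, (a q * a (π q) + a q * u (π q) + u q * a (π q) + u q * u (π q)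
        + 2 * (a q * a (π q) * u (π q) + a q * u q * a (π q)
          + a q * u q * u (π q) + u q * a (π q) * u (π q))) :=
        Finset.sum_congr rfl fun q _ => step q
    _ = (∑ q, a q * a (π q)) + (∑ q, a q * u (π q)) + (∑ q, u q * a (π q))
        + (∑ q, u q * u (π q))
        + 2 * ((∑ q, a q * a (π q) * u (π q)) + (∑ q, a q * u q * a (π q))
          + (∑ q, a q * u q * u (π q)) + (∑ q, u q * a (π q) * u (π q))) := by
        simp only [Finset.sum_add_distrib, ← Finset.mul_sum]
    _ = (∑ q, a q * a (π q)) + 2 * (∑ q, u (π q) * a q) + (∑ q, u q * u (π q)) := by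
        have h1 : (∑ q, u q * a (π q)) = ∑ q, u (π q) * a q := by
          rw [← sum_pi π hπ (fun q => u (π q) * a q)]
          simp [hπ _]
        have h2 : (∑ q, a q * u (π q)) = ∑ q, u (π q) * a q := by
          exact Finset.sum_congr rfl fun q _ => mul_comm _ _
        have h3 : (∑ q, a q * a (π q) * u (π q)) = ∑ q, a q * u q * a (π q) := by
          rw [← sum_pi π hπ (fun q => a q * u q * a (π q))]
          refine Finset.sum_congr rfl fun q _ => ?_
          rw [hπ _]; ring
        have h4 : (∑ q, u q * a (π q) * u (π q)) = ∑ q, a q * u q * u (π q) := by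
          rw [← sum_pi π hπ (fun q => a q * u q * u (π q))]
          refine Finset.sum_congr rfl fun q _ => ?_
          rw [hπ _]; ring
        rw [h1, h2, h3, h4]
        have h4' : (4 : ZMod 4) = 0 := by decide
        ring_nf
        simp [h4']

lemma Ipow_cast_eq {n k : ℕ} (h : (n : ZMod 4) = k) : (Complex.I)^n = Complex.I^k :=
  Ipow n k ((ZMod.natCast_eq_natCast_iff n k 4).mp h)

lemma comm_UX {m : ℕ} (π : Lab m → Lab m) (hπ : Function.Involutive π) (w : St m)
    (hD : ((∑ q, (w q).val * (w (π q)).val : ℕ) : ZMod 4) = 0) :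
    UPg m π * Xmat m w = Xmat m w * Zmat m (fun q => w (π q)) * UPg m π := by
  ext y x
  rw [UPg, Zmat, Matrix.diagonal_mul, Matrix.mul_diagonal, Matrix.mul_diagonal]
  unfold Xmat
  simp only [Matrix.of_apply]
  by_cases h : y = x + w
  · subst h
    simp only [if_pos rfl, mul_one, one_mul]
    have hkey := keymod π hπ w x
    rw [hD, add_zero] at hkey
    have hcast : ((∑ q, ((x+w) q).val * ((x+w) (π q)).val : ℕ) : ZMod 4)
        = ((∑ q, (x q).val * (x (π q)).val + 2 * Nwt m (fun q => w (π q)) x : ℕ) : ZMod 4) := by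
      push_cast
      push_cast at hkey
      linear_combination hkey
    rw [Ipow_cast_eq hcast, pow_add, pow_mul, Complex.I_sq]
    ring
  · simp [if_neg h]

lemma comm_UZ {m : ℕ} (π : Lab m → Lab m) (v : St m) :
    UPg m π * Zmat m v = Zmat m v * UPg m π := by
  rw [UPg, Zmat, Matrix.diagonal_mul_diagonal, Matrix.diagonal_mul_diagonal]
  exact congrArg Matrix.diagonal (funext fun x => mul_comm _ _)

lemma UPg_mul_inv (m : ℕ) (π : Lab m → Lab m) :
    UPg m π * Matrix.diagonal (fun x : St m => (Complex.I ^ (∑ q, (x q).val * (x (π q)).val))⁻¹) = 1 := by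
  rw [UPg, Matrix.diagonal_mul_diagonal, ← Matrix.diagonal_one]
  refine congrArg Matrix.diagonal (funext fun x => ?_)
  exact mul_inv_cancel₀ (pow_ne_zero _ Complex.I_ne_zero)

lemma UPg_inv_mul (m : ℕ) (π : Lab m → Lab m) :
    Matrix.diagonal (fun x : St m => (Complex.I ^ (∑ q, (x q).val * (x (π q)).val))⁻¹) * UPg m π = 1 := by
  rw [UPg, Matrix.diagonal_mul_diagonal, ← Matrix.diagonal_one]
  refine congrArg Matrix.diagonal (funext fun x => ?_)
  exact inv_mul_cancel₀ (pow_ne_zero _ Complex.I_ne_zero)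

noncomputable def Uunit (m : ℕ) (π : Lab m → Lab m) : (Matrix (St m) (St m) ℂ)ˣ :=
  ⟨UPg m π, Matrix.diagonal (fun x : St m => (Complex.I ^ (∑ q, (x q).val * (x (π q)).val))⁻¹),
    UPg_mul_inv m π, UPg_inv_mul m π⟩

lemma UPg_matinv (m : ℕ) (π : Lab m → Lab m) :
    (UPg m π)⁻¹ = ((Uunit m π)⁻¹ : (Matrix (St m) (St m) ℂ)ˣ) :=
  Matrix.inv_eq_right_inv (UPg_mul_inv m π)

variable {m : ℕ} {K : Finset (Fin m × Fin m)}

noncomputable def jK (K : Finset (Fin m × Fin m)) (a : Fin m) : Fin m :=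
  if h : (K.filter (fun p => p.1 = a)).Nonempty then h.choose.2 else a

lemma jK_mem (hK : distinctPairs m K) {a : Fin m}
    (h : (K.filter (fun p => p.1 = a)).Nonempty) : (a, jK K a) ∈ K := by
  have hc := h.choose_spec
  rw [Finset.mem_filter] at hc
  have hj : jK K a = h.choose.2 := dif_pos h
  have : (a, jK K a) = h.choose := Prod.ext_iff.mpr ⟨hc.2.symm, hj⟩
  rw [this]
  exact hc.1

lemma filt_eq (hK : distinctPairs m K) {a : Fin m}
    (h : (K.filter (fun p => p.1 = a)).Nonempty) :
    K.filter (fun p => p.1 = a) = {(a, jK K a)} := by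
  have hc := h.choose_spec
  rw [Finset.mem_filter] at hc
  have hj : jK K a = h.choose.2 := dif_pos h
  rw [Finset.eq_singleton_iff_unique_mem]
  constructor
  · rw [Finset.mem_filter]
    exact ⟨jK_mem hK h, rfl⟩
  · intro q hq
    rw [Finset.mem_filter] at hq
    by_cases hqc : q = h.choose
    · exact Prod.ext_iff.mpr ⟨hq.2, by rw [hqc, hj]⟩
    · exact absurd (hq.2.trans hc.2.symm) ((hK.2 q hq.1 h.choose hc.1 hqc).1)

lemma QK_apply_first (hK : distinctPairs m K) (x : Lab m) {a : Fin m}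
    (h : (K.filter (fun p => p.1 = a)).Nonempty) :
    QKmap m K x a = x a + x (jK K a) := by
  rw [QKmap, filt_eq hK h, Finset.sum_singleton]

lemma QK_apply_empty (x : Lab m) {a : Fin m}
    (h : ¬ (K.filter (fun p => p.1 = a)).Nonempty) :
    QKmap m K x a = x a := by
  rw [QKmap, Finset.not_nonempty_iff_eq_empty.mp h, Finset.sum_empty, add_zero]

lemma snd_not_first (hK : distinctPairs m K) {p : Fin m × Fin m} (hp : p ∈ K) :
    K.filter (fun q => q.1 = p.2) = ∅ := by
  rw [Finset.filter_eq_empty_iff]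
  intro q hq
  by_cases hqp : q = p
  · subst hqp
    exact fun h => hK.1 q hq h
  · exact fun h => (hK.2 p hp q hq (Ne.symm hqp)).2.2.1 h.symm

lemma QK_invol (hK : distinctPairs m K) : Function.Involutive (QKmap m K) := by
  intro x
  funext l
  have h1 : ∀ p ∈ K.filter (fun p => p.1 = l), QKmap m K x p.2 = x p.2 := by
    intro p hp
    rw [Finset.mem_filter] at hp
    show x p.2 + _ = x p.2
    rw [snd_not_first hK hp.1, Finset.sum_empty, add_zero]
  show QKmap m K x l + ∑ p ∈ K.filter (fun p => p.1 = l), QKmap m K x p.2 = x l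
  rw [Finset.sum_congr rfl h1]
  show x l + _ + _ = x l
  rw [add_assoc, CharTwo.add_self_eq_zero, add_zero]

lemma zmod2_sq : ∀ z : ZMod 2, z * z = z := by decide

lemma vA_union (P Q : Finset (Fin m)) (x : Lab m) :
    vA m P x * vA m Q x = vA m (P ∪ Q) x := by
  unfold vA
  have hQ : Q ∩ P ∪ Q \ P = Q := sup_inf_sdiff Q P
  have hdisj : Disjoint (Q ∩ P) (Q \ P) := Finset.disjoint_sdiff.mono_left Finset.inter_subset_right
  have h1 : ∏ a ∈ Q, x a = (∏ a ∈ Q ∩ P, x a) * ∏ a ∈ Q \ P, x a := by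
    rw [← Finset.prod_union hdisj, hQ]
  have h2 : P ∪ Q = P ∪ Q \ P := by rw [Finset.union_sdiff_self_eq_union]
  have h3 : Disjoint P (Q \ P) := Finset.disjoint_sdiff
  rw [h1, h2, Finset.prod_union h3]
  have h4 : (∏ a ∈ P, x a) * ∏ a ∈ Q ∩ P, x a = ∏ a ∈ P, x a := by
    have h5 : Q ∩ P ⊆ P := Finset.inter_subset_right
    rw [← Finset.prod_sdiff h5]
    have : (∏ a ∈ P \ (Q ∩ P), x a) * (∏ a ∈ Q ∩ P, x a) * ∏ a ∈ Q ∩ P, x a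
        = (∏ a ∈ P \ (Q ∩ P), x a) * ((∏ a ∈ Q ∩ P, x a) * ∏ a ∈ Q ∩ P, x a) := by ring
    rw [this, zmod2_sq _]

  calc (∏ a ∈ P, x a) * ((∏ a ∈ Q ∩ P, x a) * ∏ a ∈ Q \ P, x a)
      = ((∏ a ∈ P, x a) * ∏ a ∈ Q ∩ P, x a) * ∏ a ∈ Q \ P, x a := by ring
    _ = (∏ a ∈ P, x a) * ∏ a ∈ Q \ P, x a := by rw [h4]

lemma jK_injOn (hK : distinctPairs m K) {a a' : Fin m}
    (ha : (K.filter (fun p => p.1 = a)).Nonempty)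
    (ha' : (K.filter (fun p => p.1 = a')).Nonempty)
    (h : jK K a = jK K a') : a = a' := by
  by_contra hne
  have h1 := jK_mem hK ha
  have h2 := jK_mem hK ha'
  have hpq : (a, jK K a) ≠ (a', jK K a') := fun hc => hne (congrArg Prod.fst hc)
  exact (hK.2 _ h1 _ h2 hpq).2.2.2 h

/-- the "good" subsets in the expansion -/
def goodT (K : Finset (Fin m × Fin m)) (A : Finset (Fin m)) : Finset (Finset (Fin m)) :=
  A.powerset.filter (fun T => ∀ a ∈ A \ T, (K.filter (fun p => p.1 = a)).Nonempty)

/-- the subset attached to a good subset -/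
noncomputable def BT (K : Finset (Fin m × Fin m)) (A : Finset (Fin m)) (T : Finset (Fin m)) :
    Finset (Fin m) :=
  T ∪ (A \ T).image (jK K)

lemma BT_card (A T : Finset (Fin m)) (hT : T ⊆ A) : (BT K A T).card ≤ A.card := by
  calc (BT K A T).card ≤ T.card + ((A \ T).image (jK K)).card := Finset.card_union_le _ _
    _ ≤ T.card + (A \ T).card := by
        exact Nat.add_le_add_left (Finset.card_image_le) _
    _ = A.card := by
        rw [add_comm]
        exact Finset.card_sdiff_add_card_eq_card hT

lemma expand_vA_QK (hK : distinctPairs m K) (A : Finset (Fin m)) :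
    (fun x => vA m A (QKmap m K x)) = ∑ T ∈ goodT K A, vA m (BT K A T) := by
  funext x
  rw [Finset.sum_apply]
  show vA m A (QKmap m K x) = _
  unfold vA
  have h1 : ∏ a ∈ A, QKmap m K x a
      = ∑ T ∈ A.powerset, (∏ a ∈ T, x a) * ∏ a ∈ A \ T, (∑ p ∈ K.filter (fun p => p.1 = a), x p.2) := by
    rw [← Finset.prod_add]
    rfl
  have hcond : ∀ T ∈ A.powerset,
      (∏ a ∈ T, x a) * (∏ a ∈ A \ T, (∑ p ∈ K.filter (fun p => p.1 = a), x p.2)) ≠ 0 →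
        ∀ a ∈ A \ T, (K.filter (fun p => p.1 = a)).Nonempty := by
    intro T _ hne a ha
    by_contra hemp
    apply hne
    have : ∑ p ∈ K.filter (fun p => p.1 = a), x p.2 = 0 := by
      rw [Finset.not_nonempty_iff_eq_empty.mp hemp, Finset.sum_empty]
    rw [Finset.prod_eq_zero ha this, mul_zero]
  rw [h1, goodT, ← Finset.sum_filter_of_ne hcond]
  · refine Finset.sum_congr rfl fun T hT => ?_
    rw [Finset.mem_filter, Finset.mem_powerset] at hT
    have h2 : ∏ a ∈ A \ T, (∑ p ∈ K.filter (fun p => p.1 = a), x p.2)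
        = ∏ a ∈ A \ T, x (jK K a) := by
      refine Finset.prod_congr rfl fun a ha => ?_
      rw [filt_eq hK (hT.2 a ha), Finset.sum_singleton]
    rw [h2]
    have h3 : ∏ a ∈ A \ T, x (jK K a) = ∏ b ∈ (A \ T).image (jK K), x b := by
      rw [Finset.prod_image]
      intro a ha a' ha' h
      exact jK_injOn hK (hT.2 a ha) (hT.2 a' ha') h
    rw [h3]
    exact vA_union T ((A \ T).image (jK K)) x

lemma D_zero (hm : Even m) (h0 : 0 < m) (hK : distinctPairs m K)
    (A : Finset (Fin m)) (hA : A.card ≤ m / 2 - 1) :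
    ((∑ q, ((vA m A) q).val * ((vA m A) (QKmap m K q)).val : ℕ) : ZMod 4) = 0 := by
  classical
  set w : St m := vA m A with hw
  set w' : St m := fun q => vA m A (QKmap m K q) with hw'
  have hsum : (∑ q, (w q).val * (w' q).val) = Nwt m w w' := (Nwt_eq_sum m w w').symm
  show ((∑ q, (w q).val * (w' q).val : ℕ) : ZMod 4) = 0
  rw [hsum, ZMod.natCast_eq_zero_iff]
  -- the set of constrained coordinates
  set C : Finset (Fin m) := A ∪ (K.filter (fun p => p.1 ∈ A)).image Prod.snd with hC
  have hfiltcard : (K.filter (fun p => p.1 ∈ A)).card ≤ A.card := by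
    apply Finset.card_le_card_of_injOn Prod.fst
    · intro p hp; exact (Finset.mem_filter.mp hp).2
    · intro p hp q hq hpq
      by_contra hne
      exact (hK.2 p (Finset.mem_filter.mp hp).1 q (Finset.mem_filter.mp hq).1 hne).1 hpq
  have hCcard : C.card ≤ m - 2 := by
    have h1 : C.card ≤ A.card + A.card :=
      le_trans (Finset.card_union_le _ _)
        (Nat.add_le_add_left (le_trans Finset.card_image_le hfiltcard) _)
    obtain ⟨k, hk⟩ := hm
    have : A.card ≤ m / 2 - 1 := hA
    omega
  have hcompl : 1 < (Finset.univ \ C).card := by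
    rw [Finset.card_sdiff_of_subset (Finset.subset_univ C), Finset.card_univ, Fintype.card_fin]
    obtain ⟨k, hk⟩ := hm
    omega
  obtain ⟨i₁, hi₁, i₂, hi₂, hne⟩ := Finset.one_lt_card.mp hcompl
  have hi₁C : i₁ ∉ C := (Finset.mem_sdiff.mp hi₁).2
  have hi₂C : i₂ ∉ C := (Finset.mem_sdiff.mp hi₂).2
  -- the predicate depends only on coordinates in C
  have hdep : ∀ q q' : Lab m, (∀ c ∈ C, q c = q' c) →
      ((w q = 1 ∧ w' q = 1) ↔ (w q' = 1 ∧ w' q' = 1)) := by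
    intro q q' hqq
    have hv : w q = w q' := by
      refine Finset.prod_congr rfl fun a ha => ?_
      exact hqq a (Finset.mem_union_left _ ha)
    have hv2 : w' q = w' q' := by
      refine Finset.prod_congr rfl fun a ha => ?_
      show QKmap m K q a = QKmap m K q' a
      rw [QKmap]
      have h1 : q a = q' a := hqq a (Finset.mem_union_left _ ha)
      have h2 : ∀ p ∈ K.filter (fun p => p.1 = a), q p.2 = q' p.2 := by
        intro p hp
        rw [Finset.mem_filter] at hp
        refine hqq p.2 (Finset.mem_union_right _ ?_)
        exact Finset.mem_image_of_mem Prod.snd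
          (Finset.mem_filter.mpr ⟨hp.1, hp.2 ▸ ha⟩)
      rw [h1, Finset.sum_congr rfl h2]
      rfl
    rw [hv, hv2]
  -- fiberwise counting
  set S : Finset (Lab m) := Finset.univ.filter (fun q => w q = 1 ∧ w' q = 1) with hS
  have hNwt : Nwt m w w' = S.card := rfl
  set shift : (ZMod 2 × ZMod 2) → Lab m → Lab m :=
    fun ε q l => if l = i₁ then q l + ε.1 else if l = i₂ then q l + ε.2 else q l with hshift
  have hs1 : ∀ ε q, shift ε q i₁ = q i₁ + ε.1 := by intro ε q; simp [hshift]
  have hs2 : ∀ ε q, shift ε q i₂ = q i₂ + ε.2 := by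
    intro ε q; simp [hshift, hne.symm]
  have hsC : ∀ ε q, ∀ c ∈ C, shift ε q c = q c := by
    intro ε q c hc
    have hc1 : c ≠ i₁ := fun h => hi₁C (h ▸ hc)
    have hc2 : c ≠ i₂ := fun h => hi₂C (h ▸ hc)
    simp [hshift, hc1, hc2]
  have hss : ∀ ε q, shift ε (shift ε q) = q := by
    intro ε q
    funext l
    by_cases h1 : l = i₁
    · subst h1; rw [hs1, hs1, add_assoc, CharTwo.add_self_eq_zero, add_zero]
    · by_cases h2 : l = i₂
      · subst h2; rw [hs2, hs2, add_assoc, CharTwo.add_self_eq_zero, add_zero]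
      · simp [hshift, h1, h2]
  have hmemS : ∀ ε q, q ∈ S → shift ε q ∈ S := by
    intro ε q hq
    rw [hS, Finset.mem_filter] at hq ⊢
    exact ⟨Finset.mem_univ _, (hdep _ _ (hsC ε q)).mpr hq.2⟩
  have hfib : ∀ ε : ZMod 2 × ZMod 2,
      (S.filter (fun q => (q i₁, q i₂) = ε)).card
        = (S.filter (fun q => (q i₁, q i₂) = ((0 : ZMod 2), (0 : ZMod 2)))).card := by
    intro ε
    refine Finset.card_bij' (fun q _ => shift ε q) (fun q _ => shift ε q) ?_ ?_ ?_ ?_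
    · intro q hq
      rw [Finset.mem_filter] at hq ⊢
      have he : q i₁ = ε.1 ∧ q i₂ = ε.2 := by
        have := hq.2; rw [Prod.ext_iff] at this; exact this
      refine ⟨hmemS ε q hq.1, ?_⟩
      show (shift ε q i₁, shift ε q i₂) = ((0 : ZMod 2), (0 : ZMod 2))
      rw [hs1, hs2, he.1, he.2, CharTwo.add_self_eq_zero, CharTwo.add_self_eq_zero]
    · intro q hq
      rw [Finset.mem_filter] at hq ⊢
      have he : q i₁ = 0 ∧ q i₂ = 0 := by
        have := hq.2; rw [Prod.ext_iff] at this; exact this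
      refine ⟨hmemS ε q hq.1, ?_⟩
      show (shift ε q i₁, shift ε q i₂) = ε
      rw [hs1, hs2, he.1, he.2, zero_add, zero_add]
    · intro q _; exact hss ε q
    · intro q _; exact hss ε q
  have htot : S.card = ∑ ε : ZMod 2 × ZMod 2, (S.filter (fun q => (q i₁, q i₂) = ε)).card :=
    Finset.card_eq_sum_card_fiberwise (fun q _ => Finset.mem_univ _)
  rw [hNwt, htot]
  rw [Finset.sum_congr rfl (fun ε _ => hfib ε), Finset.sum_const]
  have : (Finset.univ : Finset (ZMod 2 × ZMod 2)).card = 4 := by decide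
  rw [this]
  exact Dvd.intro _ rfl

lemma Zunit_mem {B : Finset (Fin m)} (hB : B.card ≤ m / 2 - 1) :
    Zunit m (vA m B) ∈ stab m :=
  Subgroup.subset_closure ⟨B, hB, Or.inr rfl⟩

lemma Zsum_mem {ι : Type*} (s : Finset ι) (f : ι → St m)
    (hf : ∀ t ∈ s, ∃ B : Finset (Fin m), B.card ≤ m / 2 - 1 ∧ f t = vA m B) :
    Zunit m (∑ t ∈ s, f t) ∈ stab m := by
  classical
  induction s using Finset.induction with
  | empty =>
      have : Zunit m (∑ t ∈ (∅ : Finset ι), f t) = 1 := by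
        apply Units.ext
        show Zmat m (∑ t ∈ (∅ : Finset ι), f t) = 1
        rw [Finset.sum_empty, Zmat_zero]
      rw [this]
      exact one_mem _
  | @insert a s' ha ih =>
      have hsplit : Zunit m (∑ t ∈ insert a s', f t) = Zunit m (f a) * Zunit m (∑ t ∈ s', f t) := by
        apply Units.ext
        show Zmat m (∑ t ∈ insert a s', f t) = Zmat m (f a) * Zmat m (∑ t ∈ s', f t)
        rw [Finset.sum_insert ha, Zmat_add]
      rw [hsplit]
      obtain ⟨B, hB, hfB⟩ := hf a (Finset.mem_insert_self a s')
      have h1 : Zunit m (f a) ∈ stab m := by rw [hfB]; exact Zunit_mem hB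
      exact mul_mem h1 (ih (fun t ht => hf t (Finset.mem_insert_of_mem ht)))

lemma ZQK_mem (hK : distinctPairs m K) {A : Finset (Fin m)} (hA : A.card ≤ m / 2 - 1) :
    Zunit m (fun q => vA m A (QKmap m K q)) ∈ stab m := by
  have hexp : (fun q => vA m A (QKmap m K q)) = ∑ T ∈ goodT K A, vA m (BT K A T) :=
    expand_vA_QK hK A
  rw [hexp]
  apply Zsum_mem
  intro T hT
  rw [goodT, Finset.mem_filter, Finset.mem_powerset] at hT
  exact ⟨BT K A T, le_trans (BT_card A T hT.1) hA, rfl⟩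


/-- Conjugation by `U_P(Q(K))` maps the stabilizer group of `QRM(m)` onto
itself. -/
theorem stmt10 (m : ℕ) (hm : Even m) (h0 : 0 < m) (K : Finset (Fin m × Fin m))
    (hK : distinctPairs m K) :
    ∀ g ∈ stab m,
      (∃ h ∈ stab m, (h : Matrix (St m) (St m) ℂ) =
        UPg m (QKmap m K) * (g : Matrix (St m) (St m) ℂ) * (UPg m (QKmap m K))⁻¹) ∧
      (∃ h ∈ stab m, (h : Matrix (St m) (St m) ℂ) =
        (UPg m (QKmap m K))⁻¹ * (g : Matrix (St m) (St m) ℂ) * UPg m (QKmap m K)) := by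
  intro g hg
  have hπ : Function.Involutive (QKmap m K) := QK_invol hK
  set U : (Matrix (St m) (St m) ℂ)ˣ := Uunit m (QKmap m K) with hU
  have hUval : (U : Matrix (St m) (St m) ℂ) = UPg m (QKmap m K) := rfl
  have hUinv : (UPg m (QKmap m K))⁻¹ = ((U⁻¹ : (Matrix (St m) (St m) ℂ)ˣ) : Matrix (St m) (St m) ℂ) :=
    UPg_matinv m (QKmap m K)
  suffices hS : U * g * U⁻¹ ∈ stab m ∧ U⁻¹ * g * U ∈ stab m by
    constructor
    · exact ⟨U * g * U⁻¹, hS.1, by rw [hUinv]; rfl⟩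
    · exact ⟨U⁻¹ * g * U, hS.2, by rw [hUinv]; rfl⟩
  have key : ∀ x ∈ {u : (Matrix (St m) (St m) ℂ)ˣ |
      ∃ A : Finset (Fin m), A.card ≤ m / 2 - 1 ∧
        ((u : Matrix (St m) (St m) ℂ) = Xmat m (vA m A) ∨
         (u : Matrix (St m) (St m) ℂ) = Zmat m (vA m A))},
      U * x * U⁻¹ ∈ stab m ∧ U⁻¹ * x * U ∈ stab m := by
    intro x hx
    obtain ⟨A, hA, hXZ⟩ := hx
    have hxmem : x ∈ stab m := Subgroup.subset_closure ⟨A, hA, hXZ⟩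
    rcases hXZ with hX | hZ
    · -- X generator
      set Zq : (Matrix (St m) (St m) ℂ)ˣ := Zunit m (fun q => vA m A (QKmap m K q)) with hZq
      have hZqmem : Zq ∈ stab m := ZQK_mem hK hA
      have hD := D_zero hm h0 hK A hA
      have hUX : U * x = x * Zq * U := by
        apply Units.ext
        show UPg m (QKmap m K) * (x : Matrix (St m) (St m) ℂ)
          = (x : Matrix (St m) (St m) ℂ) * Zmat m (fun q => vA m A (QKmap m K q)) * UPg m (QKmap m K)
        rw [hX]
        exact comm_UX (QKmap m K) hπ (vA m A) hD
      have hUZ : U * Zq = Zq * U := by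
        apply Units.ext
        exact comm_UZ (QKmap m K) (fun q => vA m A (QKmap m K q))
      have hZ2 : Zq * Zq = 1 := by
        apply Units.ext
        show Zmat m _ * Zmat m _ = 1
        exact Zmat_sq m _
      constructor
      · have : U * x * U⁻¹ = x * Zq := by
          rw [hUX, mul_assoc, mul_inv_cancel, mul_one]
        rw [this]; exact mul_mem hxmem hZqmem
      · have hXU : x * U = U * x * Zq := by
          calc x * U = x * (Zq * Zq) * U := by rw [hZ2, mul_one]
            _ = x * Zq * (Zq * U) := by group
            _ = x * Zq * (U * Zq) := by rw [hUZ]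
            _ = (x * Zq * U) * Zq := by group
            _ = U * x * Zq := by rw [← hUX]
        have : U⁻¹ * x * U = x * Zq := by
          rw [mul_assoc, hXU, ← mul_assoc, ← mul_assoc, inv_mul_cancel, one_mul]
        rw [this]; exact mul_mem hxmem hZqmem
    · -- Z generator
      have hUx : U * x = x * U := by
        apply Units.ext
        show UPg m (QKmap m K) * (x : Matrix (St m) (St m) ℂ)
          = (x : Matrix (St m) (St m) ℂ) * UPg m (QKmap m K)
        rw [hZ]
        exact comm_UZ (QKmap m K) (vA m A)
      constructor
      · have : U * x * U⁻¹ = x := by rw [hUx, mul_assoc, mul_inv_cancel, mul_one]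
        rw [this]; exact hxmem
      · have : U⁻¹ * x * U = x := by
          rw [mul_assoc, ← hUx, ← mul_assoc, inv_mul_cancel, one_mul]
        rw [this]; exact hxmem
  refine Subgroup.closure_induction (fun x hx => key x hx) ?_ ?_ ?_ hg
  · constructor <;> simpa using one_mem (stab m)
  · intro a b _ _ ha hb
    constructor
    · have : U * (a * b) * U⁻¹ = (U * a * U⁻¹) * (U * b * U⁻¹) := by group
      rw [this]; exact mul_mem ha.1 hb.1
    · have : U⁻¹ * (a * b) * U = (U⁻¹ * a * U) * (U⁻¹ * b * U) := by group
      rw [this]; exact mul_mem ha.2 hb.2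
  · intro a _ ha
    constructor
    · have : U * a⁻¹ * U⁻¹ = (U * a * U⁻¹)⁻¹ := by group
      rw [this]; exact inv_mem ha.1
    · have : U⁻¹ * a⁻¹ * U = (U⁻¹ * a * U)⁻¹ := by group
      rw [this]; exact inv_mem ha.2
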